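/- Let z_1,...,z_d be complex numbers (d ≥ 2, n = c+d, c ≥ 1) such that H_{c+1}(z_1,...,z_d) = H_{c+2}(z_1,...,z_d) = ... = H_{n-1}(z_1,...,z_d) = 0. Then z_1^n = z_2^n = ... = z_d^n, and moreover if some z_i ≠ 0, then all z_j are nonzero and pairwise distinct. -/

import Mathlib

noncomputable section

/-- Complete homogeneous symmetric polynomial of degree `m` in `d` variables. -/
def Hpoly (d m : ℕ) (z : Fin d → ℂ) : ℂ :=
  ∑ α ∈ Finset.Nat.antidiagonalTuple d m, ∏ i, z i ^ α i

open Polynomial PowerSeries in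
lemma geom_mul (w : ℂ) :
    ((1 - Polynomial.C w * Polynomial.X : Polynomial ℂ) : PowerSeries ℂ) *
      PowerSeries.mk (fun k => w ^ k) = 1 := by
  have : ((1 - Polynomial.C w * Polynomial.X : Polynomial ℂ) : PowerSeries ℂ)
      = 1 - PowerSeries.C w * PowerSeries.X := by
    push_cast
    simp
  rw [this, sub_mul, one_mul]
  ext k
  rw [map_sub]
  cases k with
  | zero => simp
  | succ k =>
    rw [mul_assoc, PowerSeries.coeff_C_mul, PowerSeries.coeff_succ_X_mul]
    simp [pow_succ, mul_comm]

open Polynomial PowerSeries in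
lemma coeff_G (d m : ℕ) (z : Fin d → ℂ) :
    PowerSeries.coeff m (∏ i, PowerSeries.mk (fun k => z i ^ k)) = Hpoly d m z := by
  classical
  rw [PowerSeries.coeff_prod, Hpoly]
  refine Finset.sum_bij' (fun l _ => (l : Fin d → ℕ))
    (fun f _ => Finsupp.equivFunOnFinite.symm f) ?_ ?_ ?_ ?_ ?_
  · intro l hl
    rw [Finset.mem_finsuppAntidiag] at hl
    rw [Finset.Nat.mem_antidiagonalTuple]
    simpa [Finset.sum_apply'] using hl.1
  · intro f hf
    rw [Finset.Nat.mem_antidiagonalTuple] at hf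
    rw [Finset.mem_finsuppAntidiag]
    refine ⟨?_, Finset.subset_univ _⟩
    simpa using hf
  · intro l _; exact Finsupp.equivFunOnFinite.symm_apply_apply l
  · intro f _; rfl
  · intro l _
    simp [PowerSeries.coeff_mk]

/-- If `H_{c+1}(z) = ⋯ = H_{n-1}(z) = 0` (with `n = c + d`, `c ≥ 1`, `d ≥ 2`),
then all the `z_i^n` are equal; and if some `z_i ≠ 0` then all `z_j` are nonzero
and pairwise distinct. -/
theorem stmt4 (c d n : ℕ) (hc : 1 ≤ c) (hd : 2 ≤ d) (hn : n = c + d)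
    (z : Fin d → ℂ) (hvan : ∀ m, c + 1 ≤ m → m ≤ n - 1 → Hpoly d m z = 0) :
    (∀ i j, z i ^ n = z j ^ n) ∧
      ((∃ i, z i ≠ 0) → (∀ j, z j ≠ 0) ∧ Function.Injective z) := by
  classical
  have hn0 : n ≠ 0 := by omega
  set f : Fin d → Polynomial ℂ := fun i => 1 - Polynomial.C (z i) * Polynomial.X with hf
  set P : Polynomial ℂ := ∏ i, f i with hP
  set G : PowerSeries ℂ := ∏ i, PowerSeries.mk (fun k => z i ^ k) with hG
  -- P * G = 1 in power series
  have hPG : (P : PowerSeries ℂ) * G = 1 := by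
    rw [hP, hG, ← Polynomial.coeToPowerSeries.ringHom_apply, map_prod,
      ← Finset.prod_mul_distrib]
    rw [Finset.prod_eq_one]
    intro i _
    rw [Polynomial.coeToPowerSeries.ringHom_apply]
    exact geom_mul (z i)
  set Q : Polynomial ℂ := PowerSeries.trunc (c + 1) G with hQ
  -- degree bounds
  have hdegf : ∀ i, (f i).natDegree ≤ 1 := by
    intro i
    refine le_trans (Polynomial.natDegree_sub_le _ _) ?_
    simp [Polynomial.natDegree_C_mul_le]
    exact le_trans (Polynomial.natDegree_C_mul_le _ _) Polynomial.natDegree_X_le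
  have hdegP : P.natDegree ≤ d := by
    refine le_trans (Polynomial.natDegree_prod_le _ _) ?_
    calc ∑ i, (f i).natDegree ≤ ∑ _i : Fin d, 1 := Finset.sum_le_sum fun i _ => hdegf i
    _ = d := by simp
  have hdegQ : Q.natDegree ≤ c := by
    rw [hQ]
    have := PowerSeries.natDegree_trunc_lt G c
    omega
  -- coefficients of P*Q below n agree with those of 1
  have hlow : ∀ k, k ≤ n - 1 → (P * Q).coeff k = if k = 0 then 1 else 0 := by
    intro k hk
    have h1 : (P * Q).coeff k = (PowerSeries.coeff k) ((P : PowerSeries ℂ) * G) := by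
      rw [← Polynomial.coeff_coe, Polynomial.coe_mul, PowerSeries.coeff_mul,
        PowerSeries.coeff_mul]
      refine Finset.sum_congr rfl ?_
      rintro ⟨u, v⟩ huv
      rw [Finset.HasAntidiagonal.mem_antidiagonal] at huv
      have hvk : v ≤ k := by omega
      congr 1
      rw [Polynomial.coeff_coe, hQ, PowerSeries.coeff_trunc]
      by_cases hvc : v < c + 1
      · rw [if_pos hvc]
      · rw [if_neg hvc, hG, coeff_G]
        exact (hvan v (by omega) (by omega)).symm
    rw [h1, hPG]
    simp [PowerSeries.coeff_one]
  set a : ℂ := (P * Q).coeff n with ha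
  have hPQ : P * Q = 1 + Polynomial.C a * Polynomial.X ^ n := by
    ext k
    rcases lt_trichotomy k n with hlt | rfl | hgt
    · rw [hlow k (by omega)]
      simp [Polynomial.coeff_X_pow, Polynomial.coeff_one, Nat.ne_of_lt hlt]
    · simp [Polynomial.coeff_X_pow, Polynomial.coeff_one, hn0, ← ha]
    · have h1 : (P * Q).coeff k = 0 := by
        refine Polynomial.coeff_eq_zero_of_natDegree_lt ?_
        refine lt_of_le_of_lt (Polynomial.natDegree_mul_le) ?_
        omega
      rw [h1]
      rw [Polynomial.coeff_add, Polynomial.coeff_one, Polynomial.coeff_C_mul,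
        Polynomial.coeff_X_pow, if_neg (by omega : k ≠ 0), if_neg (by omega : ¬ k = n)]
      ring
  -- roots
  have hroot : ∀ i, z i ≠ 0 → Polynomial.eval (z i)⁻¹ P = 0 := by
    intro i hi
    rw [hP]
    rw [Polynomial.eval_prod]
    refine Finset.prod_eq_zero (Finset.mem_univ i) ?_
    simp [hf, mul_inv_cancel₀ hi]
  have hkey : ∀ i, z i ^ n = -a := by
    intro i
    by_cases hzi : z i = 0
    · have ha0 : a = 0 := by
        rw [ha]
        refine Polynomial.coeff_eq_zero_of_natDegree_lt ?_
        refine lt_of_le_of_lt (Polynomial.natDegree_mul_le) ?_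
        have hP' : P.natDegree ≤ d - 1 := by
          refine le_trans (Polynomial.natDegree_prod_le _ _) ?_
          rw [← Finset.add_sum_erase _ _ (Finset.mem_univ i)]
          have : (f i).natDegree = 0 := by
            simp [hf, hzi]
          rw [this, zero_add]
          calc ∑ j ∈ Finset.univ.erase i, (f j).natDegree
              ≤ ∑ _j ∈ Finset.univ.erase i, 1 :=
                Finset.sum_le_sum fun j _ => hdegf j
            _ = d - 1 := by simp [Finset.card_erase_of_mem]
        omega
      rw [hzi, ha0, zero_pow hn0, neg_zero]
    · have h1 : Polynomial.eval (z i)⁻¹ (P * Q) = 0 := by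
        rw [Polynomial.eval_mul, hroot i hzi, zero_mul]
      rw [hPQ] at h1
      simp only [Polynomial.eval_add, Polynomial.eval_one, Polynomial.eval_mul,
        Polynomial.eval_C, Polynomial.eval_pow, Polynomial.eval_X, inv_pow] at h1
      have hzn : z i ^ n ≠ 0 := pow_ne_zero _ hzi
      have h2 : z i ^ n + a = 0 := by
        have h3 := congrArg (fun t => t * z i ^ n) h1
        simpa [add_mul, mul_assoc, inv_mul_cancel₀ hzn] using h3
      linear_combination h2
  refine ⟨fun i j => by rw [hkey i, hkey j], ?_⟩
  rintro ⟨i, hi⟩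
  have hane : a ≠ 0 := by
    intro h0
    apply hi
    have := hkey i
    rw [h0, neg_zero] at this
    exact pow_eq_zero_iff hn0 |>.mp this
  have hall : ∀ j, z j ≠ 0 := by
    intro j hj0
    apply hane
    have := hkey j
    rw [hj0, zero_pow hn0] at this
    exact (neg_eq_zero.mp this.symm)
  refine ⟨hall, ?_⟩
  intro j k hjk
  by_contra hne
  have hkmem : k ∈ Finset.univ.erase j := Finset.mem_erase.mpr ⟨Ne.symm hne, Finset.mem_univ k⟩
  have hfac : P = f j ^ 2 * ∏ l ∈ (Finset.univ.erase j).erase k, f l := by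
    rw [hP, ← Finset.mul_prod_erase _ f (Finset.mem_univ j),
      ← Finset.mul_prod_erase _ f hkmem]
    have : f k = f j := by rw [hf]; simp [hjk]
    rw [this]; ring
  set R : Polynomial ℂ := (∏ l ∈ (Finset.univ.erase j).erase k, f l) * Q with hR
  have hfac2 : (1 : Polynomial ℂ) + Polynomial.C a * Polynomial.X ^ n = f j ^ 2 * R := by
    rw [← hPQ, hfac, hR]; ring
  set t0 : ℂ := (z j)⁻¹ with ht0
  have hft0 : Polynomial.eval t0 (f j) = 0 := by
    simp [hf, ht0, mul_inv_cancel₀ (hall j)]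
  have hder := congrArg (fun p => Polynomial.eval t0 (Polynomial.derivative p)) hfac2
  simp only [Polynomial.derivative_add, Polynomial.derivative_one, Polynomial.derivative_C_mul,
    Polynomial.derivative_X_pow, Polynomial.derivative_mul, Polynomial.derivative_pow,
    Polynomial.eval_add, Polynomial.eval_mul, Polynomial.eval_pow, Polynomial.eval_C,
    Polynomial.eval_X, Polynomial.eval_zero, Polynomial.eval_natCast, zero_add, hft0,
    Polynomial.derivative_C, Polynomial.derivative_X, Polynomial.eval_one, mul_one, mul_zero,
    zero_mul, pow_one, pow_two, add_zero] at hder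
  have hlhs : a * (n * t0 ^ (n - 1)) ≠ 0 := by
    refine mul_ne_zero hane (mul_ne_zero ?_ (pow_ne_zero _ (inv_ne_zero (hall j))))
    exact_mod_cast hn0
  apply hlhs
  linear_combination hder
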